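/- arXiv:2209.02220 — 7 statements merged into one kernel-verified Lean document; each statement's English description precedes it below -/
import Mathlib

section
/- For nonnegative integers n, k and real φ, the noncentral Stirling number of the second kind satisfies S(n+1, k, φ) = φ·S(n, k, φ) + S(n, k−1, φ+1). -/
open Finset

/-- Noncentral Stirling numbers of the second kind, with `S n k φ = 0` for `k < 0`. -/
noncomputable def nS (n : ℕ) (k : ℤ) (φ : ℝ) : ℝ :=
  if k < 0 then 0 else
    (1 / (Nat.factorial k.toNat : ℝ)) *
      ∑ i ∈ Finset.range (k.toNat + 1),
        (Nat.choose k.toNat i : ℝ) * (-1) ^ (k.toNat - i) * ((i : ℝ) + φ) ^ n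

lemma nS_nat (n k : ℕ) (φ : ℝ) : nS n (k : ℤ) φ =
    (1 / (Nat.factorial k : ℝ)) *
      ∑ i ∈ Finset.range (k + 1),
        (Nat.choose k i : ℝ) * (-1) ^ (k - i) * ((i : ℝ) + φ) ^ n := by
  simp [nS]

lemma key_shift (n m : ℕ) (φ : ℝ) :
    ∑ i ∈ range (m + 2), ((m+1).choose i : ℝ) * (-1) ^ (m + 1 - i) * (i : ℝ) * ((i : ℝ) + φ) ^ n
      = (m + 1 : ℝ) * ∑ i ∈ range (m + 1), (m.choose i : ℝ) * (-1) ^ (m - i) * ((i : ℝ) + (φ + 1)) ^ n := by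
  rw [Finset.sum_range_succ']
  simp only [Nat.cast_zero, mul_zero, zero_mul, add_zero]
  rw [Finset.mul_sum]
  apply Finset.sum_congr rfl
  intro i hi
  have hc : ((m+1).choose (i+1) : ℝ) * (i + 1) = (m + 1 : ℝ) * (m.choose i : ℝ) := by
    have := Nat.add_one_mul_choose_eq m i
    have : ((m+1) * m.choose i : ℕ) = ((m+1).choose (i+1) * (i+1) : ℕ) := this
    exact_mod_cast this.symm
  have he : m + 1 - (i + 1) = m - i := by omega
  have hx : ((i : ℝ) + 1 + φ) = ((i : ℝ) + (φ + 1)) := by ring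
  push_cast
  rw [hx]
  linear_combination ((-1:ℝ)^(m-i) * ((i:ℝ)+(φ+1))^n) * hc

theorem stirling_recursion_shift (n k : ℕ) (φ : ℝ) :
    nS (n + 1) (k : ℤ) φ = φ * nS n (k : ℤ) φ + nS n ((k : ℤ) - 1) (φ + 1) := by
  cases k with
  | zero =>
    have h0 : nS n (((0:ℕ) : ℤ) - 1) (φ + 1) = 0 := by norm_num [nS]
    rw [h0, add_zero, nS_nat, nS_nat]
    simp [pow_succ]
    ring
  | succ m =>
    have hc : ((m + 1 : ℕ) : ℤ) - 1 = (m : ℤ) := by push_cast; ring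
    rw [hc, nS_nat, nS_nat, nS_nat]
    have hsplit : ∀ i : ℕ, ((m+1).choose i : ℝ) * (-1) ^ (m + 1 - i) * ((i : ℝ) + φ) ^ (n+1)
        = φ * (((m+1).choose i : ℝ) * (-1) ^ (m + 1 - i) * ((i : ℝ) + φ) ^ n)
          + ((m+1).choose i : ℝ) * (-1) ^ (m + 1 - i) * (i : ℝ) * ((i : ℝ) + φ) ^ n := by
      intro i; ring
    rw [Finset.sum_congr rfl (fun i _ => hsplit i), Finset.sum_add_distrib, ← Finset.mul_sum,
      key_shift n m φ]
    have hfac : ((m+1).factorial : ℝ) = (m + 1 : ℝ) * (m.factorial : ℝ) := by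
      push_cast [Nat.factorial_succ]; ring
    have hm : (m.factorial : ℝ) ≠ 0 := by positivity
    have hm1 : (m + 1 : ℝ) ≠ 0 := by positivity
    rw [hfac]
    field_simp
end

section
/- For each k = 0, 1, …, m, the vector v_k with entries v_{i,k} = C(m−i, k−i) (zero when k < i) is an eigenvector of the (m+1)×(m+1) upper-bidiagonal matrix P with eigenvalue λ_k = 1 − (1 − k/m)·θ, where P has diagonal entries P_{t,t} = 1 − θ(m−t)/m and superdiagonal entries P_{t,t+1} = θ(m−t)/m. -/
open Finset Matrix

/-- Transition matrix of the extended occupancy chain on states `0, …, m`. -/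
noncomputable def P (m : ℕ) (θ : ℝ) : Matrix (Fin (m + 1)) (Fin (m + 1)) ℝ :=
  fun t s =>
    if (s : ℕ) = (t : ℕ) then 1 - θ * ((m : ℝ) - (t : ℕ)) / m
    else if (s : ℕ) = (t : ℕ) + 1 then θ * ((m : ℝ) - (t : ℕ)) / m
    else 0

theorem occupancy_eigenvectors (m : ℕ) (hm : 0 < m) (θ : ℝ) (k : Fin (m + 1)) :
    (P m θ).mulVec
        (fun i : Fin (m + 1) =>
          if (i : ℕ) ≤ (k : ℕ) then ((m - (i : ℕ)).choose ((k : ℕ) - (i : ℕ)) : ℝ) else 0) =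
      (1 - (1 - ((k : ℕ) : ℝ) / m) * θ) •
        (fun i : Fin (m + 1) =>
          if (i : ℕ) ≤ (k : ℕ) then ((m - (i : ℕ)).choose ((k : ℕ) - (i : ℕ)) : ℝ) else 0) := by
  have hm' : (m : ℝ) ≠ 0 := Nat.cast_ne_zero.mpr hm.ne'
  set v : Fin (m+1) → ℝ := fun i =>
    if (i : ℕ) ≤ (k : ℕ) then ((m - (i : ℕ)).choose ((k : ℕ) - (i : ℕ)) : ℝ) else 0 with hv
  have hk : (k : ℕ) ≤ m := Nat.lt_succ_iff.mp k.isLt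
  funext i
  have him : (i : ℕ) ≤ m := Nat.lt_succ_iff.mp i.isLt
  simp only [mulVec, dotProduct, Pi.smul_apply, smul_eq_mul]
  by_cases hi : (i : ℕ) < m
  · set i' : Fin (m+1) := ⟨(i : ℕ) + 1, by omega⟩ with hi'
    have hval : (i' : ℕ) = (i : ℕ) + 1 := rfl
    have hne : i ≠ i' := by
      intro h
      have h2 := congrArg Fin.val h
      rw [hval] at h2
      omega
    have hsum : ∀ s : Fin (m+1), P m θ i s * v s =
        (if s = i then P m θ i i * v i else 0) + (if s = i' then P m θ i i' * v i' else 0) := by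
      intro s
      rcases eq_or_ne s i with rfl | h1
      · rw [if_pos rfl, if_neg hne]; ring
      · rcases eq_or_ne s i' with rfl | h2
        · rw [if_pos rfl, if_neg h1]; ring
        · have hP : P m θ i s = 0 := by
            simp only [P]
            rw [if_neg (fun h => h1 (Fin.ext h)), if_neg (fun h => h2 (Fin.ext (by
              rw [hval]; exact h)))]
          rw [if_neg h1, if_neg h2, hP]; ring
    rw [Finset.sum_congr rfl (fun s _ => hsum s), Finset.sum_add_distrib,
      Finset.sum_ite_eq' Finset.univ i, Finset.sum_ite_eq' Finset.univ i']
    simp only [Finset.mem_univ, if_true]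
    have hPii : P m θ i i = 1 - θ * ((m : ℝ) - (i : ℕ)) / m := by
      simp [P]
    have hPii' : P m θ i i' = θ * ((m : ℝ) - (i : ℕ)) / m := by
      simp only [P, hval]
      rw [if_neg (by omega)]
      simp
    rw [hPii, hPii']
    by_cases hik : (i : ℕ) ≤ (k : ℕ)
    · by_cases hik' : (i : ℕ) + 1 ≤ (k : ℕ)
      · have hvi : v i = ((m - (i:ℕ)).choose ((k:ℕ) - i) : ℝ) := by
          simp only [hv]; rw [if_pos hik]
        have hvi' : v i' = ((m - ((i:ℕ)+1)).choose ((k:ℕ) - ((i:ℕ)+1)) : ℝ) := by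
          simp only [hv, hval]; rw [if_pos hik']
        rw [hvi, hvi']
        have hid : (m - (i:ℕ)) * (m - ((i:ℕ)+1)).choose ((k:ℕ) - ((i:ℕ)+1))
            = (m - (i:ℕ)).choose ((k:ℕ) - (i:ℕ)) * ((k:ℕ) - (i:ℕ)) := by
          have h1 : m - ((i:ℕ)+1) + 1 = m - (i:ℕ) := by omega
          have h2 : (k:ℕ) - ((i:ℕ)+1) + 1 = (k:ℕ) - (i:ℕ) := by omega
          have := Nat.add_one_mul_choose_eq (m - ((i:ℕ)+1)) ((k:ℕ) - ((i:ℕ)+1))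
          simpa [Nat.succ_eq_add_one, h1, h2] using this
        have hidR := congrArg (fun n : ℕ => (n : ℝ)) hid
        push_cast [Nat.cast_sub him, Nat.cast_sub hik] at hidR
        field_simp
        linear_combination θ * hidR
      · have hik2 : (i : ℕ) = (k : ℕ) := by omega
        have hz : (k:ℕ) - (i:ℕ) = 0 := by omega
        have hvi : v i = 1 := by
          simp only [hv]; rw [if_pos hik]; simp [hz]
        have hvi' : v i' = 0 := by
          simp only [hv, hval]; rw [if_neg (by omega)]
        rw [hvi, hvi', hik2]
        field_simp
        ring
    · have hvi : v i = 0 := by simp only [hv]; rw [if_neg hik]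
      have hvi' : v i' = 0 := by
        simp only [hv, hval]; rw [if_neg (by omega)]
      rw [hvi, hvi']; ring
  · have him' : (i : ℕ) = m := by omega
    have hsum : ∀ s : Fin (m+1), P m θ i s * v s =
        (if s = i then P m θ i i * v i else 0) := by
      intro s
      rcases eq_or_ne s i with rfl | h1
      · rw [if_pos rfl]
      · have hP : P m θ i s = 0 := by
          simp only [P]
          have hs := s.isLt
          rw [if_neg (fun h => h1 (Fin.ext h)), if_neg (by omega)]
        rw [if_neg h1, hP]; ring
    rw [Finset.sum_congr rfl (fun s _ => hsum s), Finset.sum_ite_eq' Finset.univ i]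
    simp only [Finset.mem_univ, if_true]
    have hPii : P m θ i i = 1 - θ * ((m : ℝ) - (i : ℕ)) / m := by
      simp [P]
    rw [hPii, him']
    by_cases hkm : (k : ℕ) = m
    · have hvi : v i = 1 := by
        simp only [hv]; rw [if_pos (by omega)]; simp [him', hkm]
      rw [hvi, hkm]
      field_simp
    · have hvi : v i = 0 := by
        simp only [hv]; rw [if_neg (by omega)]
      rw [hvi]; ring
end

section
/- For integers 0 ≤ t ≤ k ≤ m, the n-step transition probability of the extended occupancy Markov chain from state t to state k equals C(m−t, k−t)·∑_{i=0}^{k−t} C(k−t, i)·(−1)^{k−t−i}·(1 − θ·(m−t−i)/m)^n. -/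
open Finset Matrix

noncomputable def lam (m : ℕ) (θ : ℝ) (j : ℕ) : ℝ := 1 - θ * ((m : ℝ) - j) / m

noncomputable def F (m : ℕ) (θ : ℝ) (t k n : ℕ) : ℝ :=
  ((m - t).choose (k - t) : ℝ) *
    ∑ i ∈ Finset.range (k - t + 1),
      ((k - t).choose i : ℝ) * (-1) ^ (k - t - i) * lam m θ (t + i) ^ n

lemma altsum (d : ℕ) (hd : d ≠ 0) :
    ∑ i ∈ Finset.range (d + 1), ((d.choose i : ℝ) * (-1) ^ (d - i)) = 0 := by
  have h := add_pow (1 : ℝ) (-1) d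
  have h0 : ((1 : ℝ) + -1) ^ d = 0 := by norm_num [zero_pow hd]
  rw [h0] at h
  refine Eq.trans ?_ h.symm
  exact Finset.sum_congr rfl (fun i _ => by ring)

lemma lam_sub (m : ℕ) (hm : 0 < m) (θ : ℝ) (t e i : ℕ) :
    lam m θ (t + i) = lam m θ (t + e + 1) - θ * ((e : ℝ) + 1 - i) / m := by
  unfold lam
  have hm0 : (m : ℝ) ≠ 0 := Nat.cast_ne_zero.mpr hm.ne'
  field_simp
  push_cast
  ring

lemma Fdiag (m : ℕ) (θ : ℝ) (t n : ℕ) : F m θ t t n = lam m θ t ^ n := by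
  simp [F]

lemma key (m : ℕ) (hm : 0 < m) (θ : ℝ) (n t e : ℕ) (h : t + e + 1 ≤ m) :
    F m θ t (t + e + 1) (n + 1) =
      F m θ t (t + e + 1) n * lam m θ (t + e + 1)
        + F m θ t (t + e) n * (θ * ((m : ℝ) - ((t + e : ℕ) : ℝ)) / m) := by
  have hm0 : (m : ℝ) ≠ 0 := Nat.cast_ne_zero.mpr hm.ne'
  have h1 : t + e + 1 - t = e + 1 := by omega
  have h2 : t + e - t = e := by omega
  unfold F
  rw [h1, h2]
  have hsplit : ∀ i ∈ Finset.range (e + 1 + 1),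
      ((e + 1).choose i : ℝ) * (-1) ^ (e + 1 - i) * lam m θ (t + i) ^ (n + 1)
      = ((e + 1).choose i : ℝ) * (-1) ^ (e + 1 - i) * lam m θ (t + i) ^ n * lam m θ (t + e + 1)
        - θ / m * (((e + 1).choose i : ℝ) * ((e : ℝ) + 1 - i) * (-1) ^ (e + 1 - i) * lam m θ (t + i) ^ n) := by
    intro i _
    rw [pow_succ, lam_sub m hm θ t e i]
    ring
  rw [Finset.sum_congr rfl hsplit, Finset.sum_sub_distrib]
  have hT : ∑ i ∈ Finset.range (e + 1 + 1),
      θ / m * (((e + 1).choose i : ℝ) * ((e : ℝ) + 1 - i) * (-1) ^ (e + 1 - i) * lam m θ (t + i) ^ n)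
      = -(θ * ((e : ℝ) + 1) / m) *
          ∑ i ∈ Finset.range (e + 1), ((e).choose i : ℝ) * (-1) ^ (e - i) * lam m θ (t + i) ^ n := by
    rw [Finset.sum_range_succ]
    have hlast : θ / m * (((e + 1).choose (e + 1) : ℝ) * ((e : ℝ) + 1 - ((e + 1 : ℕ) : ℝ)) *
        (-1) ^ (e + 1 - (e + 1)) * lam m θ (t + (e + 1)) ^ n) = 0 := by
      push_cast
      ring
    rw [hlast, add_zero, Finset.mul_sum]
    refine Finset.sum_congr rfl ?_
    intro i hi
    have hie : i ≤ e := Nat.lt_succ_iff.mp (Finset.mem_range.mp hi)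
    have hs : e + 1 - i = (e - i) + 1 := by omega
    have hch : ((e + 1).choose i : ℝ) * ((e : ℝ) + 1 - i) = ((e : ℝ) + 1) * (e.choose i : ℝ) := by
      have hnat := congrArg (Nat.cast : ℕ → ℝ) (Nat.choose_mul_succ_eq e i)
      push_cast [Nat.cast_sub (by omega : i ≤ e + 1)] at hnat
      linear_combination -hnat
    rw [hs, pow_succ]
    linear_combination (θ / m) * (-1 : ℝ) ^ (e - i) * (-1 : ℝ) * lam m θ (t + i) ^ n * hch
  rw [hT]
  rw [show ∀ (S : ℝ), ∑ i ∈ Finset.range (e + 1 + 1),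
      ((e + 1).choose i : ℝ) * (-1) ^ (e + 1 - i) * lam m θ (t + i) ^ n * S
      = (∑ i ∈ Finset.range (e + 1 + 1),
          ((e + 1).choose i : ℝ) * (-1) ^ (e + 1 - i) * lam m θ (t + i) ^ n) * S
      from fun S => (Finset.sum_mul _ _ _).symm]
  have hc : ((m - t).choose (e + 1) : ℝ) * ((e : ℝ) + 1)
      = ((m - t).choose e : ℝ) * ((m : ℝ) - t - e) := by
    have hnat := congrArg (Nat.cast : ℕ → ℝ) (Nat.choose_succ_right_eq (m - t) e)
    push_cast [Nat.cast_sub (by omega : e ≤ m - t), Nat.cast_sub (by omega : t ≤ m)] at hnat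
    linear_combination hnat
  push_cast
  linear_combination (θ / m) * (∑ i ∈ Finset.range (e + 1),
    ((e).choose i : ℝ) * (-1) ^ (e - i) * lam m θ (t + i) ^ n) * hc

lemma main (m : ℕ) (hm : 0 < m) (θ : ℝ) :
    ∀ n (t k : Fin (m + 1)),
      (P m θ ^ n) t k = if (t : ℕ) ≤ (k : ℕ) then F m θ t k n else 0 := by
  intro n
  induction n with
  | zero =>
    intro t k
    simp only [pow_zero, Matrix.one_apply]
    by_cases hk : t = k
    · subst hk
      simp [F]
    · rw [if_neg hk]
      by_cases hle : (t : ℕ) ≤ (k : ℕ)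
      · rw [if_pos hle]
        have hd : (k : ℕ) - (t : ℕ) ≠ 0 := by
          have : (t : ℕ) ≠ (k : ℕ) := fun h => hk (Fin.ext h)
          omega
        unfold F
        rw [show ∑ i ∈ Finset.range ((k : ℕ) - (t : ℕ) + 1),
              (((k : ℕ) - (t : ℕ)).choose i : ℝ) * (-1) ^ ((k : ℕ) - (t : ℕ) - i) *
                lam m θ ((t : ℕ) + i) ^ 0
            = ∑ i ∈ Finset.range ((k : ℕ) - (t : ℕ) + 1),
              (((k : ℕ) - (t : ℕ)).choose i : ℝ) * (-1) ^ ((k : ℕ) - (t : ℕ) - i)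
          from Finset.sum_congr rfl (fun i _ => by rw [pow_zero, mul_one])]
        rw [altsum _ hd, mul_zero]
      · rw [if_neg hle]
  | succ n ih =>
    intro t k
    rw [pow_succ, Matrix.mul_apply]
    by_cases hk0 : (k : ℕ) = 0
    · have hPsk : ∀ s : Fin (m + 1), s ≠ k → P m θ s k = 0 := by
        intro s hs
        have h1 : (k : ℕ) ≠ (s : ℕ) := fun h => hs (Fin.ext h.symm)
        simp only [P]
        rw [if_neg h1, if_neg (by omega)]
      rw [Finset.sum_eq_single k (fun s _ hs => by rw [hPsk s hs, mul_zero])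
        (fun h => absurd (Finset.mem_univ k) h)]
      have hPkk : P m θ k k = 1 - θ * ((m : ℝ) - (k : ℕ)) / m := by simp [P]
      rw [hPkk, ih t k]
      by_cases hle : (t : ℕ) ≤ (k : ℕ)
      · rw [if_pos hle, if_pos hle]
        have htk : (t : ℕ) = (k : ℕ) := by omega
        rw [htk, Fdiag, Fdiag, pow_succ, lam]
      · rw [if_neg hle, if_neg hle, zero_mul]
    · set k' : Fin (m + 1) := ⟨(k : ℕ) - 1, by omega⟩ with hk'def
      have hk'v : (k' : ℕ) = (k : ℕ) - 1 := rfl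
      have hkk' : k' ≠ k := by
        intro h
        have := congrArg (Fin.val) h
        rw [hk'v] at this
        omega
      have hsum : ∑ s, (P m θ ^ n) t s * P m θ s k
          = ∑ s ∈ ({k', k} : Finset (Fin (m + 1))), (P m θ ^ n) t s * P m θ s k := by
        refine (Finset.sum_subset (Finset.subset_univ _) ?_).symm
        intro s _ hs
        simp only [Finset.mem_insert, Finset.mem_singleton, not_or] at hs
        have h1 : (k : ℕ) ≠ (s : ℕ) := fun h => hs.2 (Fin.ext h.symm)
        have h2 : (k : ℕ) ≠ (s : ℕ) + 1 := by
          intro h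
          apply hs.1
          apply Fin.ext
          rw [hk'v]
          omega
        simp only [P]
        rw [if_neg h1, if_neg h2, mul_zero]
      rw [hsum, Finset.sum_pair hkk']
      have hPk'k : P m θ k' k = θ * ((m : ℝ) - (((k : ℕ) - 1 : ℕ) : ℝ)) / m := by
        simp only [P]
        rw [if_neg (by omega), if_pos (by omega)]
      have hPkk : P m θ k k = 1 - θ * ((m : ℝ) - (k : ℕ)) / m := by simp [P]
      rw [hPk'k, hPkk, ih t k, ih t k']
      by_cases hle : (t : ℕ) ≤ (k : ℕ)
      · by_cases heq : (t : ℕ) = (k : ℕ)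
        · rw [if_pos hle, if_pos hle, if_neg (show ¬ (t : ℕ) ≤ (k' : ℕ) by rw [hk'v]; omega),
            zero_mul, zero_add]
          rw [heq, Fdiag, Fdiag, pow_succ, lam]
        · have hle' : (t : ℕ) ≤ (k' : ℕ) := by rw [hk'v]; omega
          rw [if_pos hle, if_pos hle, if_pos hle']
          have hbd : (t : ℕ) + ((k : ℕ) - (t : ℕ) - 1) + 1 ≤ m := by
            have := k.isLt
            omega
          have hkey := key m hm θ n t ((k : ℕ) - (t : ℕ) - 1) hbd
          have he : (t : ℕ) + ((k : ℕ) - (t : ℕ) - 1) + 1 = (k : ℕ) := by omega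
          have he' : (t : ℕ) + ((k : ℕ) - (t : ℕ) - 1) = (k : ℕ) - 1 := by omega
          rw [he'] at hkey
          rw [show (k : ℕ) - 1 + 1 = (k : ℕ) from by omega] at hkey
          rw [hk'v, hkey, lam]
          ring
      · rw [if_neg hle, if_neg hle,
          if_neg (show ¬ (t : ℕ) ≤ (k' : ℕ) by rw [hk'v]; omega), zero_mul, zero_mul, add_zero]

theorem occupancy_n_step_transition (m n : ℕ) (hm : 0 < m) (θ : ℝ)
    (hθ0 : 0 < θ) (hθ1 : θ ≤ 1) (t k : Fin (m + 1)) (htk : (t : ℕ) ≤ (k : ℕ)) :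
    (P m θ ^ n) t k =
      ((m - (t : ℕ)).choose ((k : ℕ) - (t : ℕ)) : ℝ) *
        ∑ i ∈ Finset.range ((k : ℕ) - (t : ℕ) + 1),
          (((k : ℕ) - (t : ℕ)).choose i : ℝ) * (-1) ^ ((k : ℕ) - (t : ℕ) - i) *
            (1 - θ * ((m : ℝ) - (t : ℕ) - i) / m) ^ n := by
  have h := main m hm θ n t k
  rw [if_pos htk] at h
  rw [h]
  unfold F lam
  refine congrArg _ (Finset.sum_congr rfl fun i _ => ?_)
  congr 2
  push_cast
  ring
end

section
/- For the extended occupancy distribution with parameters n, m, θ, and for any nonnegative integer r ≤ m, the falling-factorial moment satisfies E[(m − K)_r] = (m)_r · (1 − θr/m)^n, where K is a random variable with P(K = k) = Occ(k|n, m, θ). -/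
open Finset

/-- Extended occupancy mass function. -/
noncomputable def Occ (k n m : ℕ) (θ : ℝ) : ℝ :=
  (Nat.choose m k : ℝ) *
    ∑ i ∈ Finset.range (k + 1),
      (Nat.choose k i : ℝ) * (-1) ^ (k - i) * (1 - θ * ((m : ℝ) - i) / m) ^ n

/-- Falling factorial `(t)_r = t (t-1) ⋯ (t-r+1)`. -/
noncomputable def ffall (t : ℝ) (r : ℕ) : ℝ := ∏ i ∈ Finset.range r, (t - (i : ℝ))

lemma ffall_natCast (N r : ℕ) : ffall (N : ℝ) r = (N.descFactorial r : ℝ) := by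
  induction r with
  | zero => simp [ffall]
  | succ r ih =>
    rw [ffall, Finset.prod_range_succ, ← ffall, ih, Nat.descFactorial_succ]
    rcases lt_trichotomy r N with h | h | h
    · push_cast [Nat.cast_sub h.le]; ring
    · subst h; simp
    · rw [Nat.sub_eq_zero_of_le h.le, Nat.descFactorial_eq_zero_iff_lt.2 h]
      simp

lemma alt_sum (M : ℕ) :
    ∑ j ∈ Finset.range (M + 1), (-1 : ℝ) ^ j * (M.choose j : ℝ)
      = if M = 0 then 1 else 0 := by
  have h := Int.alternating_sum_range_choose (n := M)
  have : ((∑ i ∈ Finset.range (M + 1), ((-1) ^ i * M.choose i : ℤ) : ℤ) : ℝ)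
      = ∑ j ∈ Finset.range (M + 1), (-1 : ℝ) ^ j * (M.choose j : ℝ) := by
    push_cast; ring
  rw [← this, h]
  split_ifs <;> simp

lemma tri (N j r : ℕ) (hj : j ≤ N) :
    N.choose j * (N - j).choose r = N.choose r * (N - r).choose j := by
  rcases le_or_gt r (N - j) with h | h
  · have hjN : j ≤ N - r := by omega
    have h1 : N.choose j = N.choose (N - j) := (Nat.choose_symm hj).symm
    have h2 : (N - r).choose j = (N - r).choose (N - r - j) := (Nat.choose_symm hjN).symm
    rw [h1, h2, Nat.choose_mul h]
    congr 2
    omega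
  · have h0 : N.choose r * (N - r).choose j = 0 := by
      rcases le_or_gt r N with h2 | h2
      · rw [Nat.choose_eq_zero_of_lt (show N - r < j by omega), mul_zero]
      · rw [Nat.choose_eq_zero_of_lt h2, zero_mul]
    rw [Nat.choose_eq_zero_of_lt h, mul_zero, h0]

lemma coeff_eq (m r i : ℕ) (hr : r ≤ m) (hi : i ≤ m) :
    ∑ k ∈ Finset.range (m + 1),
        ffall ((m : ℝ) - k) r * (m.choose k : ℝ) * ((k.choose i : ℝ) * (-1) ^ (k - i))
      = if i = m - r then ffall (m : ℝ) r else 0 := by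
  have hstep1 :
      ∑ k ∈ Finset.range (m + 1),
          ffall ((m : ℝ) - k) r * (m.choose k : ℝ) * ((k.choose i : ℝ) * (-1) ^ (k - i))
        = ∑ k ∈ Finset.Ico i (m + 1),
          ffall ((m : ℝ) - k) r * (m.choose k : ℝ) * ((k.choose i : ℝ) * (-1) ^ (k - i)) := by
    refine (Finset.sum_subset (fun x hx => Finset.mem_range.2 (Finset.mem_Ico.1 hx).2) ?_).symm
    intro x hx hx'
    have : x < i := by
      simp only [Finset.mem_Ico, Finset.mem_range] at hx hx'
      omega
    rw [Nat.choose_eq_zero_of_lt this]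
    simp
  rw [hstep1, Finset.sum_Ico_eq_sum_range]
  rcases lt_or_ge (m - i) r with hcase | hcase
  · rw [Finset.sum_eq_zero, if_neg (by omega)]
    intro j hj
    have hj' : i + j ≤ m := by
      have := Finset.mem_range.1 hj; omega
    have hc : (m : ℝ) - (i + j : ℕ) = ((m - (i + j) : ℕ) : ℝ) := by
      push_cast [Nat.cast_sub hj']; ring
    rw [hc, ffall_natCast, Nat.descFactorial_eq_zero_iff_lt.2 (by omega)]
    simp
  · have hrange : m + 1 - i = (m - i) + 1 := by omega
    set N := m - i with hN
    have hterm : ∀ j ∈ Finset.range (N + 1),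
        ffall ((m : ℝ) - (i + j : ℕ)) r * (m.choose (i + j) : ℝ) *
            (((i + j).choose i : ℝ) * (-1) ^ (i + j - i))
          = ((m.choose i : ℝ) * (r.factorial : ℝ) * (N.choose r : ℝ)) *
              ((-1 : ℝ) ^ j * ((N - r).choose j : ℝ)) := by
      intro j hj
      have hjN : j ≤ N := by have := Finset.mem_range.1 hj; omega
      have hj' : i + j ≤ m := by omega
      have hc : (m : ℝ) - (i + j : ℕ) = ((m - (i + j) : ℕ) : ℝ) := by
        push_cast [Nat.cast_sub hj']; ring
      have hsub : i + j - i = j := by omega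
      have hsub2 : m - (i + j) = N - j := by omega
      rw [hc, ffall_natCast, hsub, hsub2,
        Nat.descFactorial_eq_factorial_mul_choose]
      have hcc : (m.choose (i + j) : ℝ) * ((i + j).choose i : ℝ)
          = (m.choose i : ℝ) * (N.choose j : ℝ) := by
        have := Nat.choose_mul (n := m) (k := i + j) (s := i) (Nat.le_add_right i j)
        rw [hsub] at this
        exact_mod_cast congrArg (Nat.cast (R := ℝ)) this
      have htri : (N.choose j : ℝ) * ((N - j).choose r : ℝ)
          = (N.choose r : ℝ) * ((N - r).choose j : ℝ) := by
        exact_mod_cast congrArg (Nat.cast (R := ℝ)) (tri N j r hjN)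
      push_cast
      linear_combination ((-1:ℝ)^j * (r.factorial : ℝ) * (((N-j).choose r : ℕ) : ℝ)) * hcc +
        ((-1:ℝ)^j * (r.factorial : ℝ) * ((m.choose i : ℕ) : ℝ)) * htri
    rw [hrange, Finset.sum_congr rfl hterm, ← Finset.mul_sum]
    have hshrink :
        ∑ j ∈ Finset.range (N + 1), (-1 : ℝ) ^ j * ((N - r).choose j : ℝ)
          = ∑ j ∈ Finset.range ((N - r) + 1), (-1 : ℝ) ^ j * ((N - r).choose j : ℝ) := by
      refine (Finset.sum_subset (Finset.range_subset_range.2 (by omega)) ?_).symm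
      intro x hx hx'
      have : N - r < x := by
        simp only [Finset.mem_range] at hx hx'
        omega
      rw [Nat.choose_eq_zero_of_lt this]
      simp
    rw [hshrink, alt_sum]
    by_cases hNr : N - r = 0
    · have hNeq : N = r := by omega
      have hieq : i = m - r := by omega
      rw [if_pos hNr, if_pos hieq, hNeq, Nat.choose_self, ffall_natCast,
        Nat.descFactorial_eq_factorial_mul_choose]
      have : m.choose i = m.choose r := by
        rw [hieq, Nat.choose_symm hr]
      rw [this]
      push_cast
      ring
    · rw [if_neg hNr, if_neg (by omega)]
      ring

theorem occupancy_factorial_moments (n m r : ℕ) (hm : 0 < m) (θ : ℝ)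
    (hθ0 : 0 < θ) (hθ1 : θ ≤ 1) (hr : r ≤ m) :
    ∑ k ∈ Finset.range (m + 1), ffall ((m : ℝ) - k) r * Occ k n m θ =
      ffall (m : ℝ) r * (1 - θ * r / m) ^ n := by
  have hsum : ∀ k ∈ Finset.range (m + 1),
      ffall ((m : ℝ) - k) r * Occ k n m θ
        = ∑ i ∈ Finset.range (m + 1),
            ffall ((m : ℝ) - k) r * (m.choose k : ℝ) * ((k.choose i : ℝ) * (-1) ^ (k - i)) *
              (1 - θ * ((m : ℝ) - i) / m) ^ n := by
    intro k hk
    have hk' : k + 1 ≤ m + 1 := by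
      have := Finset.mem_range.1 hk; omega
    have h1 : ffall ((m : ℝ) - k) r * Occ k n m θ
        = ∑ i ∈ Finset.range (k + 1),
            ffall ((m : ℝ) - k) r * (m.choose k : ℝ) * ((k.choose i : ℝ) * (-1) ^ (k - i)) *
              (1 - θ * ((m : ℝ) - i) / m) ^ n := by
      rw [Occ, Finset.mul_sum, Finset.mul_sum]
      exact Finset.sum_congr rfl fun i _ => by ring
    rw [h1]
    refine Finset.sum_subset (Finset.range_subset_range.2 hk') ?_
    intro x hx hx'
    have : k < x := by
      simp only [Finset.mem_range] at hx hx'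
      omega
    rw [Nat.choose_eq_zero_of_lt this]
    simp
  rw [Finset.sum_congr rfl hsum, Finset.sum_comm]
  have hinner : ∀ i ∈ Finset.range (m + 1),
      (∑ k ∈ Finset.range (m + 1),
          ffall ((m : ℝ) - k) r * (m.choose k : ℝ) * ((k.choose i : ℝ) * (-1) ^ (k - i)) *
            (1 - θ * ((m : ℝ) - i) / m) ^ n)
        = (if i = m - r then ffall (m : ℝ) r else 0) * (1 - θ * ((m : ℝ) - i) / m) ^ n := by
    intro i hi
    rw [← Finset.sum_mul, coeff_eq m r i hr (by have := Finset.mem_range.1 hi; omega)]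
  rw [Finset.sum_congr rfl hinner]
  simp only [ite_mul, zero_mul]
  rw [Finset.sum_ite_eq' (Finset.range (m + 1)) (m - r)]
  rw [if_pos (Finset.mem_range.2 (by omega))]
  have hcast : (m : ℝ) - ((m - r : ℕ) : ℝ) = (r : ℝ) := by
    push_cast [Nat.cast_sub hr]; ring
  rw [hcast]
end

section
/- The mean of the extended occupancy distribution is m·(1 − (1 − θ/m)^n); i.e., ∑_{k=0}^{m} k·Occ(k|n, m, θ) = m·(1 − (1 − θ/m)^n). -/
open Finset

lemma occ_altA (N : ℕ) : ∑ j ∈ range (N+1), (-1:ℝ)^j * (N.choose j) = if N = 0 then 1 else 0 := by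
  have h := Int.alternating_sum_range_choose (n := N)
  split_ifs with hN
  · subst hN; simp
  · rw [if_neg hN] at h
    exact_mod_cast h

lemma occ_altB (N : ℕ) :
    ∑ j ∈ range (N+1), (j:ℝ) * (-1)^j * (N.choose j) = if N = 1 then -1 else 0 := by
  cases N with
  | zero => simp
  | succ M =>
    rw [Finset.sum_range_succ']
    have hterm : ∀ j : ℕ, ((j:ℝ)+1) * (-1)^(j+1) * ((M+1).choose (j+1)) =
        -(((M:ℝ)+1) * ((-1)^j * (M.choose j))) := by
      intro j
      have h := Nat.add_one_mul_choose_eq M j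
      have h' : ((M:ℝ)+1) * (M.choose j) = ((M+1).choose (j+1) : ℝ) * ((j:ℝ)+1) := by
        exact_mod_cast h
      calc ((j:ℝ)+1) * (-1)^(j+1) * ((M+1).choose (j+1))
          = -((-1:ℝ)^j * (((M+1).choose (j+1):ℝ) * ((j:ℝ)+1))) := by rw [pow_succ]; ring
        _ = -((-1:ℝ)^j * (((M:ℝ)+1) * (M.choose j))) := by rw [← h']
        _ = -(((M:ℝ)+1) * ((-1)^j * (M.choose j))) := by ring
    have : ∑ j ∈ range (M+1), ((j:ℝ)+1) * (-1)^(j+1) * ((M+1).choose (j+1)) =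
        -(((M:ℝ)+1) * ∑ j ∈ range (M+1), (-1:ℝ)^j * (M.choose j)) := by
      rw [Finset.mul_sum, ← Finset.sum_neg_distrib]
      exact Finset.sum_congr rfl fun j _ => hterm j
    push_cast
    rw [this, occ_altA]
    split_ifs with h1 h2 <;> simp_all

lemma occ_inner_sum (m i : ℕ) (him : i ≤ m) :
    ∑ k ∈ range (m+1), (k:ℝ) * (m.choose k) * (k.choose i) * (-1)^(k-i)
      = if i = m then (m:ℝ) else if i + 1 = m then -(m:ℝ) else 0 := by
  have hsub : Finset.Ico i (m+1) ⊆ range (m+1) := by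
    intro x hx; simp only [Finset.mem_Ico, Finset.mem_range] at *; exact hx.2
  rw [← Finset.sum_subset hsub (by
    intro x hx hx'
    simp only [Finset.mem_range, Finset.mem_Ico, not_and, not_lt] at hx hx'
    have : x < i := by omega
    rw [Nat.choose_eq_zero_of_lt this]
    simp)]
  rw [Finset.sum_Ico_eq_sum_range]
  have hN : m + 1 - i = (m - i) + 1 := by omega
  rw [hN]
  set N := m - i with hNdef
  have hstep : ∀ j ∈ range (N+1),
      ((i+j : ℕ):ℝ) * (m.choose (i+j)) * ((i+j).choose i) * (-1)^(i+j-i)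
      = (m.choose i : ℝ) * (((i:ℝ) * ((-1)^j * (N.choose j)) + (j:ℝ) * (-1)^j * (N.choose j))) := by
    intro j hj
    simp only [Finset.mem_range] at hj
    have hkn : i + j ≤ m := by omega
    have hchoose := Nat.choose_mul (n := m) (k := i+j) (s := i) (Nat.le_add_right i j)
    have hc : (m.choose (i+j) : ℝ) * ((i+j).choose i) = (m.choose i : ℝ) * ((m-i).choose j) := by
      rw [show i + j - i = j from by omega] at hchoose
      exact_mod_cast hchoose
    have hji : i + j - i = j := by omega
    rw [hji]
    push_cast
    calc ((i:ℝ)+j) * (m.choose (i+j)) * ((i+j).choose i) * (-1)^j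
        = ((i:ℝ)+j) * ((m.choose (i+j) : ℝ) * ((i+j).choose i)) * (-1)^j := by ring
      _ = ((i:ℝ)+j) * ((m.choose i : ℝ) * ((m-i).choose j)) * (-1)^j := by rw [hc]
      _ = (m.choose i : ℝ) * (((i:ℝ) * ((-1)^j * (N.choose j)) + (j:ℝ) * (-1)^j * (N.choose j))) := by
          rw [← hNdef]; ring
  rw [Finset.sum_congr rfl hstep, ← Finset.mul_sum, Finset.sum_add_distrib, ← Finset.mul_sum,
    occ_altA, occ_altB]
  rcases eq_or_lt_of_le him with heq | hlt
  · subst heq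
    simp [hNdef]
  · have hine : ¬ (i = m) := by omega
    rw [if_neg hine]
    by_cases h1 : i + 1 = m
    · have : N = 1 := by omega
      rw [this]
      have hcm : m.choose i = m := by
        rw [show i = m - 1 from by omega, Nat.choose_symm (by omega : 1 ≤ m),
          Nat.choose_one_right]
      simp [hcm, h1]
    · have hN0 : N ≠ 0 := by omega
      have hN1 : N ≠ 1 := by omega
      rw [if_neg h1, if_neg hN0, if_neg hN1]
      ring

theorem occupancy_mean (n m : ℕ) (hm : 0 < m) (θ : ℝ) (hθ0 : 0 < θ) (hθ1 : θ ≤ 1) :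
    ∑ k ∈ Finset.range (m + 1), (k : ℝ) * Occ k n m θ =
      (m : ℝ) * (1 - (1 - θ / m) ^ n) := by
  set f : ℕ → ℝ := fun i => (1 - θ * ((m : ℝ) - i) / m) ^ n with hf
  have step1 : ∀ k ∈ range (m+1), (k : ℝ) * Occ k n m θ =
      ∑ i ∈ range (m+1), ((k:ℝ) * (m.choose k) * (k.choose i) * (-1)^(k-i)) * f i := by
    intro k hk
    simp only [Finset.mem_range] at hk
    rw [Occ, Finset.mul_sum, Finset.mul_sum]
    rw [Finset.sum_subset (Finset.range_subset_range.mpr (by omega : k + 1 ≤ m + 1)) (by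
      intro x hx hx'
      simp only [Finset.mem_range, not_lt] at hx hx'
      rw [Nat.choose_eq_zero_of_lt (by omega : k < x)]
      simp)]
    exact Finset.sum_congr rfl fun i _ => by rw [hf]; ring
  rw [Finset.sum_congr rfl step1, Finset.sum_comm]
  have step2 : ∀ i ∈ range (m+1),
      ∑ k ∈ range (m+1), ((k:ℝ) * (m.choose k) * (k.choose i) * (-1)^(k-i)) * f i =
      (if i = m then (m:ℝ) else if i + 1 = m then -(m:ℝ) else 0) * f i := by
    intro i hi
    simp only [Finset.mem_range] at hi
    rw [← Finset.sum_mul, occ_inner_sum m i (by omega)]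
  rw [Finset.sum_congr rfl step2]
  obtain ⟨M, rfl⟩ : ∃ M, m = M + 1 := ⟨m - 1, by omega⟩
  rw [Finset.sum_range_succ, Finset.sum_range_succ]
  rw [Finset.sum_eq_zero (by
    intro i hi
    simp only [Finset.mem_range] at hi
    rw [if_neg (by omega), if_neg (by omega), zero_mul])]
  have hfm : f (M+1) = 1 := by
    simp [hf]
  have hfM : f M = (1 - θ / (M+1)) ^ n := by
    rw [hf]
    push_cast
    ring_nf
  rw [if_pos rfl, if_neg (by omega), if_pos rfl, hfm, hfM]
  push_cast
  ring
end

section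
/- For each fixed k and n with 0 ≤ k ≤ n and θ ∈ (0, 1], the extended occupancy mass function converges to the binomial mass function as m → ∞: lim_{m→∞} Occ(k|n, m, θ) = C(n, k)·θ^k·(1−θ)^{n−k}. -/
open Finset Filter Function

open Finset Filter Function

-- step lemma: forward difference of a power
lemma fwdDiff_pow (j : ℕ) :
    fwdDiff 1 (fun i : ℕ => (i : ℝ) ^ j) =
      fun i : ℕ => ∑ l ∈ range j, (j.choose l : ℝ) * (i : ℝ) ^ l := by
  funext i
  have h := add_pow (i : ℝ) 1 j
  simp only [one_pow, mul_one] at h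
  rw [Finset.sum_range_succ] at h
  simp only [fwdDiff, Nat.cast_add, Nat.cast_one]
  rw [h, Nat.choose_self, Nat.cast_one, mul_one, add_sub_cancel_right]
  exact Finset.sum_congr rfl fun l _ => mul_comm _ _

lemma key_s14 (k : ℕ) :
    (∀ j, j < k → ∀ y : ℕ, (fwdDiff 1)^[k] (fun i : ℕ => (i : ℝ) ^ j) y = 0) ∧
      (∀ y : ℕ, (fwdDiff 1)^[k] (fun i : ℕ => (i : ℝ) ^ k) y = (k.factorial : ℝ)) := by
  induction k with
  | zero => simp
  | succ k ih =>
    have step : ∀ j (y : ℕ), (fwdDiff 1)^[k + 1] (fun i : ℕ => (i : ℝ) ^ j) y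
        = ∑ l ∈ range j, (j.choose l : ℝ) * (fwdDiff 1)^[k] (fun i : ℕ => (i : ℝ) ^ l) y := by
      intro j y
      rw [Function.iterate_succ_apply, fwdDiff_pow]
      have : (fun i : ℕ => ∑ l ∈ range j, (j.choose l : ℝ) * (i : ℝ) ^ l)
          = ∑ l ∈ range j, (fun i : ℕ => (j.choose l : ℝ) • ((i : ℝ) ^ l)) := by
        funext i; simp [smul_eq_mul]
      rw [this, fwdDiff_iter_finset_sum]
      simp only [Finset.sum_apply]
      refine Finset.sum_congr rfl fun l _ => ?_
      have h2 : (fun i : ℕ => (j.choose l : ℝ) • ((i : ℝ) ^ l))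
          = (j.choose l : ℝ) • (fun i : ℕ => (i : ℝ) ^ l) := rfl
      rw [h2, fwdDiff_iter_const_smul]
      simp
    constructor
    · intro j hj y
      rw [step]
      refine Finset.sum_eq_zero fun l hl => ?_
      rw [ih.1 l (by have := Finset.mem_range.mp hl; omega) y, mul_zero]
    · intro y
      rw [step, Finset.sum_range_succ, ih.2 y,
        Finset.sum_eq_zero fun l hl => by rw [ih.1 l (Finset.mem_range.mp hl) y, mul_zero]]
      rw [Nat.choose_succ_self_right, Nat.factorial_succ]
      push_cast
      ring

lemma A_eq (k j : ℕ) :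
    ∑ i ∈ range (k + 1), (k.choose i : ℝ) * (-1) ^ (k - i) * (i : ℝ) ^ j
      = (fwdDiff 1)^[k] (fun i : ℕ => (i : ℝ) ^ j) 0 := by
  rw [fwdDiff_iter_eq_sum_shift]
  refine Finset.sum_congr rfl fun i _ => ?_
  simp only [zero_add, smul_eq_mul, zsmul_eq_mul]
  push_cast
  ring

lemma A_lt {k j : ℕ} (h : j < k) :
    ∑ i ∈ range (k + 1), (k.choose i : ℝ) * (-1) ^ (k - i) * (i : ℝ) ^ j = 0 := by
  rw [A_eq]; exact (key_s14 k).1 j h 0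

lemma A_self (k : ℕ) :
    ∑ i ∈ range (k + 1), (k.choose i : ℝ) * (-1) ^ (k - i) * (i : ℝ) ^ k
      = (k.factorial : ℝ) := by
  rw [A_eq]; exact (key_s14 k).2 0

lemma choose_div_pow_tendsto (k : ℕ) :
    Tendsto (fun m : ℕ => (m.choose k : ℝ) / (m : ℝ) ^ k) atTop
      (nhds (1 / (k.factorial : ℝ))) := by
  have hev : ∀ᶠ m : ℕ in atTop, (m.choose k : ℝ) / (m : ℝ) ^ k
      = (1 / (k.factorial : ℝ)) * ∏ i ∈ range k, (1 - (i : ℝ) / m) := by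
    filter_upwards [eventually_ge_atTop k, eventually_ge_atTop 1] with m hmk hm1
    have hm0 : (m : ℝ) ≠ 0 := by positivity
    have hd : (m.choose k : ℝ) * (k.factorial : ℝ) = ∏ i ∈ range k, ((m : ℝ) - i) := by
      have h1 := Nat.descFactorial_eq_factorial_mul_choose m k
      rw [Nat.descFactorial_eq_prod_range] at h1
      have h2 := congrArg (Nat.cast : ℕ → ℝ) h1.symm
      push_cast at h2
      rw [mul_comm, h2]
      refine Finset.prod_congr rfl fun i hi => ?_
      rw [Nat.cast_sub (le_trans (le_of_lt (Finset.mem_range.mp hi)) hmk)]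
    have hp : ∏ i ∈ range k, (1 - (i : ℝ) / m) = (∏ i ∈ range k, ((m : ℝ) - i)) / (m : ℝ) ^ k := by
      rw [show ((m : ℝ)) ^ k = ∏ _i ∈ range k, (m : ℝ) by simp, ← Finset.prod_div_distrib]
      exact Finset.prod_congr rfl fun i _ => by field_simp
    have hfac : (k.factorial : ℝ) ≠ 0 := Nat.cast_ne_zero.mpr k.factorial_ne_zero
    rw [hp, ← hd]
    field_simp
  have hprod : Tendsto (fun m : ℕ => ∏ i ∈ range k, (1 - (i : ℝ) / m)) atTop (nhds 1) := by
    have h : Tendsto (fun m : ℕ => ∏ i ∈ range k, (1 - (i : ℝ) / m)) atTop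
        (nhds (∏ _i ∈ range k, (1 : ℝ))) :=
      tendsto_finset_prod _ fun i _ => by
        simpa using ((tendsto_const_nhds (x := (1 : ℝ)) (f := atTop)).sub
          (tendsto_const_div_atTop_nhds_zero_nat (i : ℝ)))
    simpa using h
  have hm := hprod.const_mul (1 / (k.factorial : ℝ))
  rw [mul_one] at hm
  exact hm.congr' (hev.mono fun m h => h.symm)

lemma Occ_eq (k n m : ℕ) (θ : ℝ) (hm : (m : ℝ) ≠ 0) :
    Occ k n m θ = ∑ j ∈ range (n + 1),
      ((n.choose j : ℝ) * (1 - θ) ^ (n - j) * θ ^ j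
        * (∑ i ∈ range (k + 1), (k.choose i : ℝ) * (-1) ^ (k - i) * (i : ℝ) ^ j))
      * ((m.choose k : ℝ) / (m : ℝ) ^ j) := by
  have expand : ∀ i : ℕ,
      (m.choose k : ℝ) * ((k.choose i : ℝ) * (-1) ^ (k - i) * (1 - θ * ((m : ℝ) - i) / m) ^ n)
      = ∑ j ∈ range (n + 1), ((k.choose i : ℝ) * (-1) ^ (k - i) * (i : ℝ) ^ j)
          * ((n.choose j : ℝ) * (1 - θ) ^ (n - j) * θ ^ j * ((m.choose k : ℝ) / (m : ℝ) ^ j)) := by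
    intro i
    have h1 : (1 - θ * ((m : ℝ) - i) / m) = θ * (i : ℝ) / m + (1 - θ) := by
      field_simp; ring
    rw [h1, add_pow, Finset.mul_sum, Finset.mul_sum]
    refine Finset.sum_congr rfl fun j _ => ?_
    rw [div_pow, mul_pow]
    field_simp
  have step1 : Occ k n m θ = ∑ i ∈ range (k + 1), ∑ j ∈ range (n + 1),
      ((k.choose i : ℝ) * (-1) ^ (k - i) * (i : ℝ) ^ j)
        * ((n.choose j : ℝ) * (1 - θ) ^ (n - j) * θ ^ j * ((m.choose k : ℝ) / (m : ℝ) ^ j)) := by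
    unfold Occ
    rw [Finset.mul_sum]
    exact Finset.sum_congr rfl fun i _ => expand i
  rw [step1, Finset.sum_comm]
  refine Finset.sum_congr rfl fun j _ => ?_
  rw [← Finset.sum_mul]
  ring

theorem occupancy_tendsto_binomial (n k : ℕ) (hk : k ≤ n) (θ : ℝ)
    (hθ0 : 0 < θ) (hθ1 : θ ≤ 1) :
    Filter.Tendsto (fun m : ℕ => Occ k n m θ) Filter.atTop
      (nhds ((Nat.choose n k : ℝ) * θ ^ k * (1 - θ) ^ (n - k))) := by
  have hfac : (k.factorial : ℝ) ≠ 0 := Nat.cast_ne_zero.mpr k.factorial_ne_zero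
  set c : ℕ → ℝ := fun j => (n.choose j : ℝ) * (1 - θ) ^ (n - j) * θ ^ j
      * (∑ i ∈ range (k + 1), (k.choose i : ℝ) * (-1) ^ (k - i) * (i : ℝ) ^ j) with hc
  set L : ℕ → ℝ := fun j => if j = k then c k * (1 / (k.factorial : ℝ)) else 0 with hL
  have hsum : ∑ j ∈ range (n + 1), L j = (Nat.choose n k : ℝ) * θ ^ k * (1 - θ) ^ (n - k) := by
    rw [hL, Finset.sum_ite_eq' (range (n + 1)) k fun _ => c k * (1 / (k.factorial : ℝ))]
    rw [if_pos (Finset.mem_range.mpr (by omega))]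
    rw [hc]
    simp only [A_self]
    field_simp
  rw [← hsum]
  have hterm : ∀ j ∈ range (n + 1),
      Tendsto (fun m : ℕ => c j * ((m.choose k : ℝ) / (m : ℝ) ^ j)) atTop (nhds (L j)) := by
    intro j _
    rcases lt_trichotomy j k with hjk | rfl | hjk
    · have hc0 : c j = 0 := by rw [hc]; simp [A_lt hjk]
      have : L j = 0 := by rw [hL]; simp [Nat.ne_of_lt hjk]
      rw [this]
      simpa [hc0] using (tendsto_const_nhds (x := (0:ℝ)) (f := (atTop : Filter ℕ)))
    · have : L j = c j * (1 / (j.factorial : ℝ)) := by rw [hL]; simp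
      rw [this]
      exact (choose_div_pow_tendsto j).const_mul (c j)
    · have hL0 : L j = 0 := by rw [hL]; simp [Nat.ne_of_gt hjk]
      rw [hL0]
      have h2 : Tendsto (fun m : ℕ => ((m.choose k : ℝ) / (m : ℝ) ^ k) * (1 / (m : ℝ)) ^ (j - k))
          atTop (nhds ((1 / (k.factorial : ℝ)) * 0)) := by
        refine (choose_div_pow_tendsto k).mul ?_
        have := (tendsto_one_div_atTop_nhds_zero_nat (𝕜 := ℝ)).pow (j - k)
        rwa [zero_pow (by omega : j - k ≠ 0)] at this
      rw [mul_zero] at h2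
      have hev : ∀ᶠ m : ℕ in atTop, ((m.choose k : ℝ) / (m : ℝ) ^ k) * (1 / (m : ℝ)) ^ (j - k)
          = (m.choose k : ℝ) / (m : ℝ) ^ j := by
        filter_upwards [eventually_ge_atTop 1] with m hm1
        have hm0 : (m : ℝ) ≠ 0 := by positivity
        rw [show j = k + (j - k) by omega, pow_add]
        field_simp
        rw [Nat.add_sub_cancel_left, one_div_pow]
        field_simp
      have := h2.congr' hev
      simpa using this.const_mul (c j)
  have hmain := tendsto_finset_sum (range (n + 1)) hterm
  refine hmain.congr' ?_
  filter_upwards [eventually_ge_atTop 1] with m hm1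
  rw [Occ_eq k n m θ (by positivity)]
end

section
/- Poisson mixtures of extended occupancy distributions yield a binomial: for fixed m ≥ 1, θ ∈ (0, 1], λ > 0 and 0 ≤ k ≤ m, ∑_{r=0}^{∞} (e^{−λ}λ^r/r!)·Occ(k|r, m, θ) = C(m, k)·(1 − e^{−λθ/m})^k·(e^{−λθ/m})^{m−k}. -/
open Finset Real

theorem poisson_mixture_of_occupancy (m k : ℕ) (hm : 0 < m) (hk : k ≤ m)
    (θ : ℝ) (hθ0 : 0 < θ) (hθ1 : θ ≤ 1) (lam : ℝ) (hlam : 0 < lam) :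
    ∑' r : ℕ, (Real.exp (-lam) * lam ^ r / (Nat.factorial r : ℝ)) * Occ k r m θ =
      (Nat.choose m k : ℝ) * (1 - Real.exp (-lam * θ / m)) ^ k *
        (Real.exp (-lam * θ / m)) ^ (m - k) := by
  have hm' : (m : ℝ) ≠ 0 := Nat.cast_ne_zero.mpr hm.ne'
  set x : ℕ → ℝ := fun i => 1 - θ * ((m : ℝ) - i) / m with hx
  set c : ℕ → ℝ := fun i =>
    Real.exp (-lam) * (Nat.choose m k : ℝ) * (Nat.choose k i : ℝ) * (-1) ^ (k - i) with hc
  have step1 : ∀ r : ℕ,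
      (Real.exp (-lam) * lam ^ r / (Nat.factorial r : ℝ)) * Occ k r m θ =
        ∑ i ∈ Finset.range (k + 1), c i * ((lam * x i) ^ r / (Nat.factorial r : ℝ)) := by
    intro r
    unfold Occ
    simp only [Finset.mul_sum]
    refine Finset.sum_congr rfl fun i _ => ?_
    simp only [hc, hx, mul_pow]
    ring
  have hsumm : ∀ i ∈ Finset.range (k + 1),
      Summable (fun r : ℕ => c i * ((lam * x i) ^ r / (Nat.factorial r : ℝ))) :=
    fun i _ => (Real.summable_pow_div_factorial (lam * x i)).mul_left _
  calc
    ∑' r : ℕ, (Real.exp (-lam) * lam ^ r / (Nat.factorial r : ℝ)) * Occ k r m θ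
        = ∑' r : ℕ, ∑ i ∈ Finset.range (k + 1),
            c i * ((lam * x i) ^ r / (Nat.factorial r : ℝ)) := tsum_congr step1
    _ = ∑ i ∈ Finset.range (k + 1), ∑' r : ℕ,
            c i * ((lam * x i) ^ r / (Nat.factorial r : ℝ)) := Summable.tsum_finsetSum hsumm
    _ = ∑ i ∈ Finset.range (k + 1), c i * Real.exp (lam * x i) := by
          refine Finset.sum_congr rfl fun i _ => ?_
          rw [tsum_mul_left, Real.exp_eq_exp_ℝ, NormedSpace.exp_eq_tsum_div]
    _ = ∑ i ∈ Finset.range (k + 1),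
          (Nat.choose m k : ℝ) * (Nat.choose k i : ℝ) * (-1) ^ (k - i) *
            (Real.exp (-lam * θ / m)) ^ (m - i) := by
          refine Finset.sum_congr rfl fun i hi => ?_
          have hik : i ≤ k := Nat.lt_succ_iff.mp (Finset.mem_range.mp hi)
          have him : i ≤ m := hik.trans hk
          have hmi : ((m - i : ℕ) : ℝ) = (m : ℝ) - i := Nat.cast_sub him
          have h1 : Real.exp (-lam) * Real.exp (lam * x i) =
              (Real.exp (-lam * θ / m)) ^ (m - i) := by
            rw [← Real.exp_nat_mul, ← Real.exp_add, hmi]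
            congr 1
            simp only [hx]
            ring
          simp only [hc]
          linear_combination
            ((Nat.choose m k : ℝ) * ((Nat.choose k i : ℝ) * (-1 : ℝ) ^ (k - i))) * h1
    _ = (Nat.choose m k : ℝ) * (1 - Real.exp (-lam * θ / m)) ^ k *
          (Real.exp (-lam * θ / m)) ^ (m - k) := by
          rw [sub_eq_add_neg, add_pow, Finset.mul_sum, Finset.sum_mul]
          refine Finset.sum_congr rfl fun i hi => ?_
          have hik : i ≤ k := Nat.lt_succ_iff.mp (Finset.mem_range.mp hi)
          have h2 : m - i = (k - i) + (m - k) := by omega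
          rw [h2, pow_add, neg_pow]
          ring
end
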